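/- Let B be a bialgebra over a commutative ring k, and let J be an invertible element of the tensor product algebra B ⊗_k B which is a normalised 2-cocycle: (J ⊗ 1)·((Δ⊗id)(J)) = (1 ⊗ J)·((id⊗Δ)(J)) in B ⊗ B ⊗ B, and (ε⊗id)(J) = 1_B = (id⊗ε)(J). Then B with its original multiplication, the twisted coproduct Δ_J(b) := J · Δ(b) · J⁻¹ and the original counit ε is again a bialgebra over k: Δ_J is coassociative, ε is a counit for Δ_J, and Δ_J and ε are k-algebra homomorphisms. -/

import Mathlib

/-!
Statement 10: Twisting the coproduct of a bialgebra `B` over `k` by an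
invertible normalised 2-cocycle `J ∈ B ⊗ B` yields again a bialgebra
`(B, Δ_J := J Δ(·) J⁻¹, ε)`.  (Paper: Section 3.4.1.)
-/

open TensorProduct

set_option maxHeartbeats 1000000 in
theorem drinfeld_twist_bialgebra (k B : Type*) [CommRing k] [Ring B]
    [Bialgebra k B]
    (J Jinv : B ⊗[k] B)
    (hJ : J * Jinv = 1) (hJ' : Jinv * J = 1)
    -- cocycle condition (J ⊗ 1)((Δ⊗id)(J)) = (1 ⊗ J)((id⊗Δ)(J)) in B ⊗ B ⊗ B:
    (cocycle :
      (J ⊗ₜ[k] (1 : B)) * ((TensorProduct.map (Coalgebra.comul (R := k)) LinearMap.id) J)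
        = ((TensorProduct.assoc k B B B).symm ((1 : B) ⊗ₜ[k] J))
          * ((TensorProduct.assoc k B B B).symm
              ((TensorProduct.map LinearMap.id (Coalgebra.comul (R := k))) J)))
    -- normalisation (ε⊗id)(J) = 1 = (id⊗ε)(J):
    (norm₁ : (TensorProduct.lid k B)
        ((TensorProduct.map (Coalgebra.counit (R := k)) LinearMap.id) J) = 1)
    (norm₂ : (TensorProduct.rid k B)
        ((TensorProduct.map LinearMap.id (Coalgebra.counit (R := k))) J) = 1)
    -- the twisted coproduct Δ_J b = J * Δ b * J⁻¹:
    (ΔJ : B →ₗ[k] B ⊗[k] B)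
    (hΔJ : ∀ b : B, ΔJ b = J * Coalgebra.comul (R := k) b * Jinv) :
    -- Δ_J is coassociative:
    (∀ b : B, (TensorProduct.assoc k B B B)
        ((TensorProduct.map ΔJ LinearMap.id) (ΔJ b))
      = (TensorProduct.map LinearMap.id ΔJ) (ΔJ b)) ∧
    -- ε is a counit for Δ_J:
    (∀ b : B, (TensorProduct.lid k B)
        ((TensorProduct.map (Coalgebra.counit (R := k)) LinearMap.id) (ΔJ b)) = b) ∧
    (∀ b : B, (TensorProduct.rid k B)
        ((TensorProduct.map LinearMap.id (Coalgebra.counit (R := k))) (ΔJ b)) = b) ∧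
    -- Δ_J is a k-algebra homomorphism:
    (∀ x y : B, ΔJ (x * y) = ΔJ x * ΔJ y) ∧ (ΔJ 1 = 1) ∧
    -- ε is a k-algebra homomorphism:
    (∀ x y : B, Coalgebra.counit (R := k) (x * y)
      = Coalgebra.counit (R := k) x * Coalgebra.counit (R := k) y) ∧
    (Coalgebra.counit (R := k) (1 : B) = 1) := by
  -- conjugation lemma
  have conj : ∀ a b : B ⊗[k] B, (J * a * Jinv) * (J * b * Jinv) = J * (a * b) * Jinv := by
    intro a b
    calc (J * a * Jinv) * (J * b * Jinv) = J * (a * ((Jinv * J) * (b * Jinv))) := by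
          simp only [mul_assoc]
      _ = J * (a * b) * Jinv := by rw [hJ']; simp only [one_mul, mul_assoc]
  -- ΔJ is an algebra map
  have ΔJmul : ∀ x y : B, ΔJ (x * y) = ΔJ x * ΔJ y := by
    intro x y
    rw [hΔJ, hΔJ, hΔJ, Bialgebra.comul_mul, conj]
  have ΔJ1 : ΔJ 1 = 1 := by
    rw [hΔJ, Bialgebra.comul_one, mul_one, hJ]
  -- algebra-hom packaging
  set ΔJA : B →ₐ[k] B ⊗[k] B := AlgHom.ofLinearMap ΔJ ΔJ1 ΔJmul with hΔJA
  -- multiplicativity of the various tensor maps (by transfer from algebra homs)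
  have C1m : ∀ u v : B ⊗[k] B,
      TensorProduct.map (Coalgebra.comul (R := k)) (LinearMap.id (R := k) (M := B)) (u * v)
        = TensorProduct.map (Coalgebra.comul (R := k)) LinearMap.id u
          * TensorProduct.map (Coalgebra.comul (R := k)) LinearMap.id v :=
    fun u v => map_mul (Algebra.TensorProduct.map (Bialgebra.comulAlgHom k B) (AlgHom.id k B)) u v
  have C2m : ∀ u v : B ⊗[k] B,
      TensorProduct.map (LinearMap.id (R := k) (M := B)) (Coalgebra.comul (R := k)) (u * v)
        = TensorProduct.map LinearMap.id (Coalgebra.comul (R := k)) u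
          * TensorProduct.map LinearMap.id (Coalgebra.comul (R := k)) v :=
    fun u v => map_mul (Algebra.TensorProduct.map (AlgHom.id k B) (Bialgebra.comulAlgHom k B)) u v
  have C1one : TensorProduct.map (Coalgebra.comul (R := k)) (LinearMap.id (R := k) (M := B))
      (1 : B ⊗[k] B) = 1 :=
    map_one (Algebra.TensorProduct.map (Bialgebra.comulAlgHom k B) (AlgHom.id k B))
  have C2one : TensorProduct.map (LinearMap.id (R := k) (M := B)) (Coalgebra.comul (R := k))
      (1 : B ⊗[k] B) = 1 :=
    map_one (Algebra.TensorProduct.map (AlgHom.id k B) (Bialgebra.comulAlgHom k B))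
  have Am : ∀ u v : (B ⊗[k] B) ⊗[k] B,
      TensorProduct.assoc k B B B (u * v)
        = TensorProduct.assoc k B B B u * TensorProduct.assoc k B B B v :=
    fun u v => map_mul (Algebra.TensorProduct.assoc k k k B B B) u v
  have Aone : TensorProduct.assoc k B B B (1 : (B ⊗[k] B) ⊗[k] B) = 1 :=
    map_one (Algebra.TensorProduct.assoc k k k B B B)
  have Asym : ∀ z : B ⊗[k] (B ⊗[k] B),
      TensorProduct.assoc k B B B ((TensorProduct.assoc k B B B).symm z) = z :=
    fun z => (TensorProduct.assoc k B B B).apply_symm_apply z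
  -- expansion of the twisted maps
  have F1 : ∀ u : B ⊗[k] B, TensorProduct.map ΔJ LinearMap.id u
      = (J ⊗ₜ[k] (1 : B)) * TensorProduct.map (Coalgebra.comul (R := k)) LinearMap.id u
          * (Jinv ⊗ₜ[k] (1 : B)) := by
    intro u
    induction u using TensorProduct.induction_on with
    | zero => simp
    | tmul a b =>
        simp only [TensorProduct.map_tmul, LinearMap.id_coe, id_eq, hΔJ,
          Algebra.TensorProduct.tmul_mul_tmul, one_mul, mul_one]
    | add x y hx hy => simp only [map_add, hx, hy, mul_add, add_mul]
  have F2 : ∀ u : B ⊗[k] B, TensorProduct.map LinearMap.id ΔJ u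
      = ((1 : B) ⊗ₜ[k] J) * TensorProduct.map LinearMap.id (Coalgebra.comul (R := k)) u
          * ((1 : B) ⊗ₜ[k] Jinv) := by
    intro u
    induction u using TensorProduct.induction_on with
    | zero => simp
    | tmul a b =>
        simp only [TensorProduct.map_tmul, LinearMap.id_coe, id_eq, hΔJ,
          Algebra.TensorProduct.tmul_mul_tmul, one_mul, mul_one]
    | add x y hx hy => simp only [map_add, hx, hy, mul_add, add_mul]
  -- cocycle, pushed through the associator
  have cocycle' : TensorProduct.assoc k B B B
        ((J ⊗ₜ[k] (1 : B)) * TensorProduct.map (Coalgebra.comul (R := k)) LinearMap.id J)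
      = ((1 : B) ⊗ₜ[k] J) * TensorProduct.map LinearMap.id (Coalgebra.comul (R := k)) J := by
    rw [cocycle, Am, Asym, Asym]
  -- counit facts
  have εmul : ∀ x y : B, Coalgebra.counit (R := k) (x * y)
      = Coalgebra.counit (R := k) x * Coalgebra.counit (R := k) y :=
    fun x y => Bialgebra.counit_mul x y
  have ε1 : Coalgebra.counit (R := k) (1 : B) = 1 := Bialgebra.counit_one
  refine ⟨?_, ?_, ?_, ΔJmul, ΔJ1, εmul, ε1⟩
  · -- coassociativity
    intro b
    have key : ∀ u : B ⊗[k] B,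
        TensorProduct.assoc k B B B
            ((J ⊗ₜ[k] (1 : B))
              * TensorProduct.map (Coalgebra.comul (R := k)) LinearMap.id (J * u * Jinv)
              * (Jinv ⊗ₜ[k] (1 : B)))
          = (((1 : B) ⊗ₜ[k] J)
              * TensorProduct.map LinearMap.id (Coalgebra.comul (R := k)) J)
              * TensorProduct.assoc k B B B
                  (TensorProduct.map (Coalgebra.comul (R := k)) LinearMap.id u)
              * (TensorProduct.map LinearMap.id (Coalgebra.comul (R := k)) Jinv
                  * ((1 : B) ⊗ₜ[k] Jinv)) := by
      intro u
      have expand : (J ⊗ₜ[k] (1 : B))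
            * TensorProduct.map (Coalgebra.comul (R := k)) LinearMap.id (J * u * Jinv)
            * (Jinv ⊗ₜ[k] (1 : B))
          = ((J ⊗ₜ[k] (1 : B)) * TensorProduct.map (Coalgebra.comul (R := k)) LinearMap.id J)
            * TensorProduct.map (Coalgebra.comul (R := k)) LinearMap.id u
            * (TensorProduct.map (Coalgebra.comul (R := k)) LinearMap.id Jinv
                * (Jinv ⊗ₜ[k] (1 : B))) := by
        rw [C1m, C1m]; simp only [mul_assoc]
      rw [expand, Am, Am, cocycle']
      congr 1
      -- remaining: assoc (C1 Jinv * (Jinv ⊗ 1)) = C2 Jinv * (1 ⊗ Jinv)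
      have hYX : TensorProduct.assoc k B B B
            (TensorProduct.map (Coalgebra.comul (R := k)) LinearMap.id Jinv
              * (Jinv ⊗ₜ[k] (1 : B)))
          * (((1 : B) ⊗ₜ[k] J)
              * TensorProduct.map LinearMap.id (Coalgebra.comul (R := k)) J) = 1 := by
        rw [← cocycle', ← Am]
        have h1 : TensorProduct.map (Coalgebra.comul (R := k)) LinearMap.id Jinv
              * (Jinv ⊗ₜ[k] (1 : B))
              * ((J ⊗ₜ[k] (1 : B))
                * TensorProduct.map (Coalgebra.comul (R := k)) LinearMap.id J)
            = (1 : (B ⊗[k] B) ⊗[k] B) := by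
          calc TensorProduct.map (Coalgebra.comul (R := k)) LinearMap.id Jinv
                * (Jinv ⊗ₜ[k] (1 : B))
                * ((J ⊗ₜ[k] (1 : B))
                  * TensorProduct.map (Coalgebra.comul (R := k)) LinearMap.id J)
              = TensorProduct.map (Coalgebra.comul (R := k)) LinearMap.id Jinv
                * (((Jinv ⊗ₜ[k] (1 : B)) * (J ⊗ₜ[k] (1 : B)))
                  * TensorProduct.map (Coalgebra.comul (R := k)) LinearMap.id J) := by
                simp only [mul_assoc]
            _ = TensorProduct.map (Coalgebra.comul (R := k)) LinearMap.id Jinv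
                * TensorProduct.map (Coalgebra.comul (R := k)) LinearMap.id J := by
                rw [Algebra.TensorProduct.tmul_mul_tmul, hJ', mul_one,
                  ← Algebra.TensorProduct.one_def, one_mul]
            _ = 1 := by rw [← C1m, hJ', C1one]
        rw [h1, Aone]
      have hXZ : (((1 : B) ⊗ₜ[k] J)
            * TensorProduct.map LinearMap.id (Coalgebra.comul (R := k)) J)
          * (TensorProduct.map LinearMap.id (Coalgebra.comul (R := k)) Jinv
              * ((1 : B) ⊗ₜ[k] Jinv)) = 1 := by
        calc (((1 : B) ⊗ₜ[k] J)
              * TensorProduct.map LinearMap.id (Coalgebra.comul (R := k)) J)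
            * (TensorProduct.map LinearMap.id (Coalgebra.comul (R := k)) Jinv
                * ((1 : B) ⊗ₜ[k] Jinv))
            = ((1 : B) ⊗ₜ[k] J)
              * ((TensorProduct.map LinearMap.id (Coalgebra.comul (R := k)) J
                  * TensorProduct.map LinearMap.id (Coalgebra.comul (R := k)) Jinv)
                * ((1 : B) ⊗ₜ[k] Jinv)) := by simp only [mul_assoc]
          _ = ((1 : B) ⊗ₜ[k] J) * ((1 : B) ⊗ₜ[k] Jinv) := by
              rw [← C2m, hJ, C2one, one_mul]
          _ = 1 := by
              rw [Algebra.TensorProduct.tmul_mul_tmul, mul_one, hJ,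
                ← Algebra.TensorProduct.one_def]
      exact left_inv_eq_right_inv hYX hXZ
    -- now finish
    rw [F1 (ΔJ b), hΔJ b, key, F2]
    have coas := Coalgebra.coassoc_apply (R := k) (A := B) b
    rw [show TensorProduct.assoc k B B B
          (TensorProduct.map (Coalgebra.comul (R := k)) LinearMap.id
            (Coalgebra.comul (R := k) b))
        = TensorProduct.map LinearMap.id (Coalgebra.comul (R := k))
            (Coalgebra.comul (R := k) b) from coas]
    rw [C2m, C2m]
    simp only [mul_assoc]
  · -- left counit
    intro b
    have Em : ∀ u v : B ⊗[k] B,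
        TensorProduct.lid k B
            (TensorProduct.map (Coalgebra.counit (R := k)) LinearMap.id (u * v))
          = TensorProduct.lid k B
              (TensorProduct.map (Coalgebra.counit (R := k)) LinearMap.id u)
            * TensorProduct.lid k B
              (TensorProduct.map (Coalgebra.counit (R := k)) LinearMap.id v) :=
      fun u v => map_mul ((Algebra.TensorProduct.lid k B).toAlgHom.comp
        (Algebra.TensorProduct.map (Bialgebra.counitAlgHom k B) (AlgHom.id k B))) u v
    have Eone : TensorProduct.lid k B
        (TensorProduct.map (Coalgebra.counit (R := k)) LinearMap.id (1 : B ⊗[k] B)) = 1 :=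
      map_one ((Algebra.TensorProduct.lid k B).toAlgHom.comp
        (Algebra.TensorProduct.map (Bialgebra.counitAlgHom k B) (AlgHom.id k B)))
    have EJinv : TensorProduct.lid k B
        (TensorProduct.map (Coalgebra.counit (R := k)) LinearMap.id Jinv) = 1 := by
      have h := Em J Jinv
      rw [hJ, Eone, norm₁, one_mul] at h
      exact h.symm
    have EΔ : TensorProduct.lid k B
        (TensorProduct.map (Coalgebra.counit (R := k)) LinearMap.id
          (Coalgebra.comul (R := k) b)) = b := by
      have h := LinearMap.congr_fun
        (Coalgebra.rTensor_counit_comp_comul (R := k) (A := B)) b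
      simp only [LinearMap.comp_apply] at h
      rw [show TensorProduct.map (Coalgebra.counit (R := k)) LinearMap.id
            (Coalgebra.comul (R := k) b)
          = (Coalgebra.counit (R := k)).rTensor B (Coalgebra.comul (R := k) b) from rfl, h]
      simp
    rw [hΔJ, Em, Em, norm₁, EJinv, EΔ, one_mul, mul_one]
  · -- right counit
    intro b
    have ridEq : ∀ z : B ⊗[k] k,
        TensorProduct.rid k B z = Algebra.TensorProduct.rid k k B z := by
      intro z
      induction z using TensorProduct.induction_on with
      | zero => simp
      | tmul c r => simp [Algebra.TensorProduct.rid_tmul]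
      | add x y hx hy => simp only [map_add, hx, hy]
    have Em : ∀ u v : B ⊗[k] B,
        TensorProduct.rid k B
            (TensorProduct.map LinearMap.id (Coalgebra.counit (R := k)) (u * v))
          = TensorProduct.rid k B
              (TensorProduct.map LinearMap.id (Coalgebra.counit (R := k)) u)
            * TensorProduct.rid k B
              (TensorProduct.map LinearMap.id (Coalgebra.counit (R := k)) v) := by
      intro u v
      rw [ridEq, ridEq, ridEq]
      exact map_mul ((Algebra.TensorProduct.rid k k B).toAlgHom.comp
        (Algebra.TensorProduct.map (AlgHom.id k B) (Bialgebra.counitAlgHom k B))) u v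
    have Eone : TensorProduct.rid k B
        (TensorProduct.map LinearMap.id (Coalgebra.counit (R := k)) (1 : B ⊗[k] B)) = 1 := by
      rw [ridEq]
      exact map_one ((Algebra.TensorProduct.rid k k B).toAlgHom.comp
        (Algebra.TensorProduct.map (AlgHom.id k B) (Bialgebra.counitAlgHom k B)))
    have EJinv : TensorProduct.rid k B
        (TensorProduct.map LinearMap.id (Coalgebra.counit (R := k)) Jinv) = 1 := by
      have h := Em J Jinv
      rw [hJ, Eone, norm₂, one_mul] at h
      exact h.symm
    have EΔ : TensorProduct.rid k B
        (TensorProduct.map LinearMap.id (Coalgebra.counit (R := k))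
          (Coalgebra.comul (R := k) b)) = b := by
      have h := LinearMap.congr_fun
        (Coalgebra.lTensor_counit_comp_comul (R := k) (A := B)) b
      simp only [LinearMap.comp_apply] at h
      rw [show TensorProduct.map LinearMap.id (Coalgebra.counit (R := k))
            (Coalgebra.comul (R := k) b)
          = (Coalgebra.counit (R := k)).lTensor B (Coalgebra.comul (R := k) b) from rfl, h]
      simp
    rw [hΔJ, Em, Em, norm₂, EJinv, EΔ, one_mul, mul_one]
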